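/- Let α be irrational with denominators (q_n) and F = 1_{[0,1/2)} − 1_{[1/2,1)}. If q_n is even and q_n·‖q_n α‖ < 1/2, then there is a measurable set I_n of Lebesgue measure ≤ q_n·‖q_n α‖ such that F^{(q_n)}(x) ∈ {−2, +2} for x ∈ I_n and F^{(q_n)}(x) = 0 for x ∉ I_n. -/

import Mathlib

open MeasureTheory

/-- The distance from a real number to the nearest integer. -/
noncomputable def distInt (x : ℝ) : ℝ := ⨅ m : ℤ, |x - m|

/-- The function `F = 1_{[0,1/2)} - 1_{[1/2,1)}` on the circle, as a 1-periodic
function on `ℝ`. -/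
noncomputable def Fhalf (x : ℝ) : ℝ := if Int.fract x < 1/2 then 1 else -1

open GenContFract

lemma round_min (x : ℝ) (m : ℤ) : |x - round x| ≤ |x - m| := by
  rw [abs_sub_round_eq_min]
  rcases le_or_gt (m : ℝ) ⌊x⌋ with h | h
  · have : Int.fract x ≤ x - m := by
      have : (m:ℝ) ≤ x - Int.fract x := by rw [Int.self_sub_fract]; exact_mod_cast h
      linarith
    calc min (Int.fract x) (1 - Int.fract x) ≤ Int.fract x := min_le_left _ _
      _ ≤ |x - m| := this.trans (le_abs_self _)
  · have hm : (⌊x⌋ : ℝ) + 1 ≤ m := by exact_mod_cast Int.lt_iff_add_one_le.mp (by exact_mod_cast h)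
    have hfr : x = ⌊x⌋ + Int.fract x := (Int.floor_add_fract x).symm
    have : 1 - Int.fract x ≤ m - x := by linarith
    calc min (Int.fract x) (1 - Int.fract x) ≤ 1 - Int.fract x := min_le_right _ _
      _ ≤ |x - m| := by rw [abs_sub_comm]; exact this.trans (le_abs_self _)

lemma distInt_eq (x : ℝ) : distInt x = |x - round x| := by
  refine le_antisymm (ciInf_le ⟨0, fun y ⟨m, hm⟩ => hm ▸ abs_nonneg _⟩ (round x)) ?_
  exact le_ciInf (round_min x)



lemma cf_not_term (α : ℝ) (hα : Irrational α) (k : ℕ) : ¬(GenContFract.of α).TerminatedAt k := by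
  intro h
  obtain ⟨r, hr⟩ := (GenContFract.terminates_iff_rat α).mp ⟨k, h⟩
  exact hα ⟨r, hr.symm⟩

lemma cf_conts_int (α : ℝ) (hα : Irrational α) (k : ℕ) :
    ∃ a b : ℤ, (GenContFract.of α).contsAux k = ⟨(a : ℝ), (b : ℝ)⟩ := by
  induction k using Nat.strong_induction_on with
  | _ k ih =>
    match k with
    | 0 => exact ⟨1, 0, by simp [GenContFract.contsAux]⟩
    | 1 => exact ⟨⌊α⌋, 1, by rw [first_contAux_eq_h_one, of_h_eq_floor]; norm_num⟩
    | (k + 2) =>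
      obtain ⟨gp, hgp⟩ := Option.ne_none_iff_exists'.mp (cf_not_term α hα k)
      obtain ⟨ha1, z, hz⟩ := of_partNum_eq_one_and_exists_int_partDen_eq hgp
      obtain ⟨a, b, hab⟩ := ih k (by omega)
      obtain ⟨a', b', hab'⟩ := ih (k + 1) (by omega)
      refine ⟨z * a' + a, z * b' + b, ?_⟩
      have : (GenContFract.of α).contsAux (k + 2) =
          nextConts gp.a gp.b ((GenContFract.of α).contsAux k)
            ((GenContFract.of α).contsAux (k + 1)) := by
        simp [GenContFract.contsAux, hgp]
      rw [this, hab, hab', ha1, hz]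
      simp only [nextConts, nextNum, nextDen, GenContFract.Pair.mk.injEq]
      constructor <;> push_cast <;> ring

lemma cf_facts (α : ℝ) (hα : Irrational α) (n q : ℕ)
    (hq : (q : ℝ) = (GenContFract.of α).dens n) :
    ∃ p : ℤ, 1 ≤ q ∧ IsCoprime p (q : ℤ) ∧ |(q : ℝ) * α - p| ≤ 1 / q := by
  obtain ⟨a, b, hab⟩ := cf_conts_int α hα (n + 1)
  obtain ⟨a', b', hab'⟩ := cf_conts_int α hα (n + 2)
  have hnum : (GenContFract.of α).nums n = a := by
    rw [num_eq_conts_a, nth_cont_eq_succ_nth_contAux, hab]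
  have hden : (GenContFract.of α).dens n = b := by
    rw [den_eq_conts_b, nth_cont_eq_succ_nth_contAux, hab]
  have hnum' : (GenContFract.of α).nums (n + 1) = a' := by
    rw [num_eq_conts_a, nth_cont_eq_succ_nth_contAux, hab']
  have hden' : (GenContFract.of α).dens (n + 1) = b' := by
    rw [den_eq_conts_b, nth_cont_eq_succ_nth_contAux, hab']
  -- q ≥ 1
  have hfib : ((Nat.fib (n + 1) : ℝ)) ≤ (GenContFract.of α).dens n :=
    succ_nth_fib_le_of_nth_den (Or.inr (cf_not_term α hα (n - 1)))
  have hfib1 : (1 : ℝ) ≤ (Nat.fib (n + 1) : ℝ) := by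
    exact_mod_cast Nat.one_le_iff_ne_zero.mpr (Nat.fib_pos.mpr n.succ_pos).ne'
  have hq1r : (1 : ℝ) ≤ (q : ℝ) := by rw [hq]; linarith
  have hq1 : 1 ≤ q := by exact_mod_cast hq1r
  have hq0 : (0 : ℝ) < q := by linarith
  -- q = b as integers
  have hbq : (q : ℤ) = b := by
    have : (q : ℝ) = (b : ℝ) := by rw [hq, hden]
    exact_mod_cast this
  -- monotonicity
  have hmono : (q : ℝ) ≤ (GenContFract.of α).dens (n + 1) := hq ▸ of_den_mono
  have hb'q : (q : ℝ) ≤ (b' : ℝ) := hden' ▸ hmono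
  -- determinant
  set s : SimpContFract ℝ := ⟨GenContFract.of α, GenContFract.of_isSimpContFract α⟩ with hs
  have hdet := SimpContFract.determinant (s := s) (n := n) (cf_not_term α hα n)
  have hcoe : (↑s : GenContFract ℝ) = GenContFract.of α := rfl
  rw [hcoe, hnum, hden, hnum', hden'] at hdet
  have hdetZ : a * b' - b * a' = (-1 : ℤ) ^ (n + 1) := by exact_mod_cast hdet
  set e : ℤ := (-1) ^ (n + 1) with he_def
  have he : e * e = 1 := by
    rw [he_def, ← pow_add]
    exact Even.neg_one_pow ⟨n + 1, rfl⟩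
  have hcop : IsCoprime a (q : ℤ) := by
    refine ⟨e * b', -(e * a'), ?_⟩
    rw [hbq]
    linear_combination e * hdetZ + he
  -- approximation
  have habs := abs_sub_convs_le (v := α) (n := n) (cf_not_term α hα n)
  rw [conv_eq_num_div_den, hnum, hden, ← hbq] at habs
  push_cast at habs
  refine ⟨a, hq1, hcop, ?_⟩
  have hb'0 : (0 : ℝ) < b' := lt_of_lt_of_le hq0 hb'q
  rw [hden'] at habs
  have h1 : |(q : ℝ) * α - a| = q * |α - a / q| := by
    rw [← abs_of_pos hq0, ← abs_mul]
    rw [abs_of_pos hq0]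
    congr 1
    field_simp
  rw [h1]
  calc (q : ℝ) * |α - a / q| ≤ q * (1 / (q * b')) := mul_le_mul_of_nonneg_left habs hq0.le
    _ = 1 / b' := by field_simp
    _ ≤ 1 / q := one_div_le_one_div_of_le hq0 hb'q

lemma Fhalf_int_add (y : ℝ) (k : ℤ) : Fhalf (y + k) = Fhalf y := by
  unfold Fhalf; rw [Int.fract_add_intCast]

lemma Fhalf_half (y : ℝ) : Fhalf (y + 1/2) = -Fhalf y := by
  unfold Fhalf
  have h : Int.fract (y + 1/2) = Int.fract (Int.fract y + 1/2) := by
    conv_lhs => rw [← Int.floor_add_fract y]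
    rw [add_assoc, Int.fract_intCast_add]
  rcases lt_or_ge (Int.fract y) (1/2) with hy | hy
  · have : Int.fract (Int.fract y + 1/2) = Int.fract y + 1/2 := by
      rw [Int.fract_eq_self]
      constructor
      · linarith [Int.fract_nonneg y]
      · linarith
    rw [h, this]
    rw [if_pos hy, if_neg (by linarith [Int.fract_nonneg y])]
  · have : Int.fract (Int.fract y + 1/2) = Int.fract y - 1/2 := by
      have : Int.fract y + 1/2 - 1 = Int.fract y - 1/2 := by ring
      rw [← this, ← Int.fract_sub_intCast (Int.fract y + 1/2) 1, Int.cast_one, this,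
        Int.fract_eq_self]
      constructor
      · linarith
      · linarith [Int.fract_lt_one y]
    rw [h, this]
    rw [if_neg (not_lt.mpr hy), if_pos (by linarith [Int.fract_lt_one y])]
    norm_num

lemma measurable_Fhalf : Measurable Fhalf := by
  unfold Fhalf
  exact Measurable.ite (measurableSet_lt measurable_fract measurable_const)
    measurable_const measurable_const

lemma fract_add_left (y β : ℝ) : Int.fract (y + β) = Int.fract (Int.fract y + β) := by
  conv_lhs => rw [← Int.floor_add_fract y, add_assoc, Int.fract_intCast_add]

lemma Fhalf_of_Ico {w : ℝ} (h0 : 0 ≤ w) (h1 : w < 1) :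
    Fhalf w = if w < 1/2 then 1 else -1 := by
  unfold Fhalf; rw [Int.fract_eq_self.mpr ⟨h0, h1⟩]

lemma gval (β y : ℝ) : Fhalf y - Fhalf (y + β) = 0 ∨ Fhalf y - Fhalf (y + β) = 2 ∨
    Fhalf y - Fhalf (y + β) = -2 := by
  unfold Fhalf
  split <;> split <;> norm_num

lemma gloc (β : ℝ) (hβ : |β| < 1/4) (y : ℝ) (h : Fhalf y - Fhalf (y + β) ≠ 0) :
    ∃ k : ℤ, (k : ℝ)/2 - max β 0 ≤ Int.fract y ∧ Int.fract y < (k : ℝ)/2 - min β 0 := by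
  set w := Int.fract y with hw
  have hw0 : 0 ≤ w := Int.fract_nonneg y
  have hw1 : w < 1 := Int.fract_lt_one y
  have hy1 : Fhalf y = Fhalf w := by unfold Fhalf; rw [hw, Int.fract_fract]
  have hy2 : Fhalf (y + β) = Fhalf (w + β) := by unfold Fhalf; rw [fract_add_left]
  rw [hy1, hy2] at h
  have hβ1 : -(1/4) < β := neg_lt_of_abs_lt hβ
  have hβ2 : β < 1/4 := lt_of_abs_lt hβ
  rcases lt_trichotomy β 0 with hb | hb | hb
  · -- β < 0
    rw [max_eq_right hb.le, min_eq_left hb.le]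
    rcases lt_or_ge w (1/2) with h1 | h1
    · refine ⟨0, ?_⟩
      have : w < -β := by
        by_contra hlt
        push_neg at hlt
        have hf : Fhalf (w + β) = Fhalf w := by
          rw [Fhalf_of_Ico (by linarith) (by linarith), Fhalf_of_Ico hw0 hw1,
            if_pos (by linarith : w + β < 1/2), if_pos h1]
        rw [hf] at h
        simp at h
      push_cast
      constructor <;> linarith
    · refine ⟨1, ?_⟩
      have : w < 1/2 - β := by
        by_contra hlt
        push_neg at hlt
        have hf : Fhalf (w + β) = Fhalf w := by
          rw [Fhalf_of_Ico (by linarith) (by linarith), Fhalf_of_Ico hw0 hw1,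
            if_neg (by linarith : ¬(w + β < 1/2)), if_neg (not_lt.mpr h1)]
        rw [hf] at h
        simp at h
      push_cast
      constructor <;> linarith
  · subst hb
    simp at h
  · -- β > 0
    rw [max_eq_left hb.le, min_eq_right hb.le]
    rcases lt_or_ge w (1/2) with h1 | h1
    · refine ⟨1, ?_⟩
      have : 1/2 - β ≤ w := by
        by_contra hlt
        push_neg at hlt
        have hf : Fhalf (w + β) = Fhalf w := by
          rw [Fhalf_of_Ico (by linarith) (by linarith), Fhalf_of_Ico hw0 hw1,
            if_pos (by linarith : w + β < 1/2), if_pos h1]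
        rw [hf] at h
        simp at h
      push_cast
      constructor <;> linarith
    · refine ⟨2, ?_⟩
      have : 1 - β ≤ w := by
        by_contra hlt
        push_neg at hlt
        have hf : Fhalf (w + β) = Fhalf w := by
          rw [Fhalf_of_Ico (by linarith) (by linarith), Fhalf_of_Ico hw0 hw1,
            if_neg (by linarith : ¬(w + β < 1/2)), if_neg (not_lt.mpr h1)]
        rw [hf] at h
        simp at h
      push_cast
      constructor <;> linarith

lemma gvol (β : ℝ) (hβ : |β| < 1/4) :
    volume {y | y ∈ Set.Ico (0:ℝ) 1 ∧ Fhalf y - Fhalf (y + β) ≠ 0} ≤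
      ENNReal.ofReal (2 * |β|) := by
  have hβ1 : -(1/4) < β := neg_lt_of_abs_lt hβ
  have hβ2 : β < 1/4 := lt_of_abs_lt hβ
  rcases lt_trichotomy β 0 with hb | hb | hb
  · have hsub : {y | y ∈ Set.Ico (0:ℝ) 1 ∧ Fhalf y - Fhalf (y + β) ≠ 0} ⊆
        Set.Icc 0 (-β) ∪ Set.Icc (1/2) (1/2 - β) := by
      rintro y ⟨⟨hy0, hy1⟩, hne⟩
      obtain ⟨k, hk1, hk2⟩ := gloc β hβ y hne
      rw [Int.fract_eq_self.mpr ⟨hy0, hy1⟩] at hk1 hk2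
      rw [max_eq_right hb.le] at hk1
      rw [min_eq_left hb.le] at hk2
      have hka : (-1 : ℝ) < (k : ℝ) := by linarith
      have hkb : (k : ℝ) < 2 := by linarith
      have : k = 0 ∨ k = 1 := by
        have h0 : (-1 : ℤ) < k := by exact_mod_cast hka
        have h1 : k < (2 : ℤ) := by exact_mod_cast hkb
        omega
      rcases this with rfl | rfl
      · left; push_cast at hk1 hk2; exact ⟨hy0, by linarith⟩
      · right; push_cast at hk1 hk2; exact ⟨by linarith, by linarith⟩
    calc volume {y | y ∈ Set.Ico (0:ℝ) 1 ∧ Fhalf y - Fhalf (y + β) ≠ 0}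
        ≤ volume (Set.Icc 0 (-β) ∪ Set.Icc (1/2) (1/2 - β)) := measure_mono hsub
      _ ≤ volume (Set.Icc (0:ℝ) (-β)) + volume (Set.Icc (1/2:ℝ) (1/2 - β)) := measure_union_le _ _
      _ = ENNReal.ofReal (-β) + ENNReal.ofReal (-β) := by
          rw [Real.volume_Icc, Real.volume_Icc]; norm_num
      _ = ENNReal.ofReal (2 * |β|) := by
          rw [← ENNReal.ofReal_add (by linarith) (by linarith), abs_of_neg hb]; ring_nf
  · subst hb
    have : {y | y ∈ Set.Ico (0:ℝ) 1 ∧ Fhalf y - Fhalf (y + 0) ≠ 0} = ∅ := by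
      ext y; simp
    rw [this]
    simp
  · have hsub : {y | y ∈ Set.Ico (0:ℝ) 1 ∧ Fhalf y - Fhalf (y + β) ≠ 0} ⊆
        Set.Icc (1/2 - β) (1/2) ∪ Set.Icc (1 - β) 1 := by
      rintro y ⟨⟨hy0, hy1⟩, hne⟩
      obtain ⟨k, hk1, hk2⟩ := gloc β hβ y hne
      rw [Int.fract_eq_self.mpr ⟨hy0, hy1⟩] at hk1 hk2
      rw [max_eq_left hb.le] at hk1
      rw [min_eq_right hb.le] at hk2
      have hka : (0 : ℝ) < (k : ℝ) := by linarith
      have hkb : (k : ℝ) < 3 := by linarith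
      have : k = 1 ∨ k = 2 := by
        have h0 : (0 : ℤ) < k := by exact_mod_cast hka
        have h1 : k < (3 : ℤ) := by exact_mod_cast hkb
        omega
      rcases this with rfl | rfl
      · left; push_cast at hk1 hk2; exact ⟨by linarith, by linarith⟩
      · right; push_cast at hk1 hk2; exact ⟨by linarith, by linarith⟩
    calc volume {y | y ∈ Set.Ico (0:ℝ) 1 ∧ Fhalf y - Fhalf (y + β) ≠ 0}
        ≤ volume (Set.Icc (1/2 - β) (1/2) ∪ Set.Icc (1 - β) 1) := measure_mono hsub
      _ ≤ volume (Set.Icc (1/2 - β) (1/2:ℝ)) + volume (Set.Icc (1 - β) (1:ℝ)) :=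
          measure_union_le _ _
      _ = ENNReal.ofReal β + ENNReal.ofReal β := by
          rw [Real.volume_Icc, Real.volume_Icc]; norm_num
      _ = ENNReal.ofReal (2 * |β|) := by
          rw [← ENNReal.ofReal_add (by linarith) (by linarith), abs_of_pos hb]; ring_nf

lemma gB_per (β : ℝ) (t : ℤ) (y : ℝ) :
    (Fhalf (y + t) - Fhalf (y + t + β) ≠ 0) ↔ (Fhalf y - Fhalf (y + β) ≠ 0) := by
  rw [Fhalf_int_add, show y + (t : ℝ) + β = y + β + t by ring, Fhalf_int_add]

lemma gvol_trans (β c : ℝ) (hβ : |β| < 1/4) :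
    volume {x | x ∈ Set.Ico (0:ℝ) 1 ∧ Fhalf (x + c) - Fhalf (x + c + β) ≠ 0} ≤
      ENNReal.ofReal (4 * |β|) := by
  set B : Set ℝ := {y | Fhalf y - Fhalf (y + β) ≠ 0} with hB
  have hvol_int : ∀ t : ℤ, volume (B ∩ Set.Ico (t : ℝ) ((t : ℝ) + 1)) ≤
      ENNReal.ofReal (2 * |β|) := by
    intro t
    have hpre : (fun x => x + (t : ℝ)) ⁻¹' (B ∩ Set.Ico (t : ℝ) ((t : ℝ) + 1)) =
        {y | y ∈ Set.Ico (0:ℝ) 1 ∧ Fhalf y - Fhalf (y + β) ≠ 0} := by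
      ext y
      simp only [Set.mem_preimage, Set.mem_inter_iff, Set.mem_Ico, Set.mem_setOf_eq, hB]
      rw [gB_per]
      constructor
      · rintro ⟨h1, h2, h3⟩; exact ⟨⟨by linarith, by linarith⟩, h1⟩
      · rintro ⟨⟨h2, h3⟩, h1⟩; exact ⟨h1, by linarith, by linarith⟩
    calc volume (B ∩ Set.Ico (t : ℝ) ((t : ℝ) + 1))
        = volume ((fun x => x + (t : ℝ)) ⁻¹' (B ∩ Set.Ico (t : ℝ) ((t : ℝ) + 1))) :=
          (measure_preimage_add_right volume _ _).symm
      _ = volume {y | y ∈ Set.Ico (0:ℝ) 1 ∧ Fhalf y - Fhalf (y + β) ≠ 0} := by rw [hpre]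
      _ ≤ ENNReal.ofReal (2 * |β|) := gvol β hβ
  have hpre2 : {x | x ∈ Set.Ico (0:ℝ) 1 ∧ Fhalf (x + c) - Fhalf (x + c + β) ≠ 0} =
      (fun x => x + c) ⁻¹' (B ∩ Set.Ico c (c + 1)) := by
    ext x
    simp only [Set.mem_preimage, Set.mem_inter_iff, Set.mem_Ico, Set.mem_setOf_eq, hB]
    constructor
    · rintro ⟨⟨h1, h2⟩, h3⟩; exact ⟨h3, by linarith, by linarith⟩
    · rintro ⟨h3, h1, h2⟩; exact ⟨⟨by linarith, by linarith⟩, h3⟩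
  have hsub : B ∩ Set.Ico c (c + 1) ⊆
      (B ∩ Set.Ico ((⌊c⌋ : ℝ)) ((⌊c⌋ : ℝ) + 1)) ∪
      (B ∩ Set.Ico (((⌊c⌋ + 1 : ℤ) : ℝ)) (((⌊c⌋ + 1 : ℤ) : ℝ) + 1)) := by
    rintro x ⟨hxB, hx1, hx2⟩
    have hfl : (⌊c⌋ : ℝ) ≤ c := Int.floor_le c
    have hfl2 : c < (⌊c⌋ : ℝ) + 1 := Int.lt_floor_add_one c
    rcases lt_or_ge x ((⌊c⌋ : ℝ) + 1) with h | h
    · left; exact ⟨hxB, by linarith, h⟩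
    · right
      refine ⟨hxB, ?_, ?_⟩ <;> push_cast <;> linarith
  calc volume {x | x ∈ Set.Ico (0:ℝ) 1 ∧ Fhalf (x + c) - Fhalf (x + c + β) ≠ 0}
      = volume (B ∩ Set.Ico c (c + 1)) := by
        rw [hpre2]; exact measure_preimage_add_right volume _ _
    _ ≤ volume (B ∩ Set.Ico ((⌊c⌋ : ℝ)) ((⌊c⌋ : ℝ) + 1)) +
        volume (B ∩ Set.Ico (((⌊c⌋ + 1 : ℤ) : ℝ)) (((⌊c⌋ + 1 : ℤ) : ℝ) + 1)) :=
        le_trans (measure_mono hsub) (measure_union_le _ _)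
    _ ≤ ENNReal.ofReal (2 * |β|) + ENNReal.ofReal (2 * |β|) :=
        add_le_add (hvol_int ⌊c⌋) (hvol_int (⌊c⌋ + 1))
    _ = ENNReal.ofReal (4 * |β|) := by
        rw [← ENNReal.ofReal_add (by positivity) (by positivity)]; ring_nf

lemma disj (α : ℝ) (p : ℤ) (q m : ℕ) (d β δ : ℝ)
    (hδ : (q : ℝ) * α = p + δ) (hβ : β = δ/2) (hd : d = |δ|) (hq2 : 2 ≤ q) (hm : q = m + m)
    (hcop : IsCoprime p (q : ℤ)) (hsm : (q : ℝ) * d < 1/2) (hβlt : |β| < 1/4)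
    (x : ℝ) (j j' : ℕ) (hj : j < m) (hj' : j' < m) (hjne : j ≠ j')
    (h1 : Fhalf (x + (j : ℝ) * α) - Fhalf (x + (j : ℝ) * α + β) ≠ 0)
    (h2 : Fhalf (x + (j' : ℝ) * α) - Fhalf (x + (j' : ℝ) * α + β) ≠ 0) : False := by
  obtain ⟨k, hk1, hk2⟩ := gloc β hβlt _ h1
  obtain ⟨k', hk1', hk2'⟩ := gloc β hβlt _ h2
  rw [← Int.self_sub_floor] at hk1 hk2 hk1' hk2'
  set Aj : ℤ := ⌊x + (j : ℝ) * α⌋ with hAj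
  set Aj' : ℤ := ⌊x + (j' : ℝ) * α⌋ with hAj'
  set r : ℤ := 2 * ((j : ℤ) - (j' : ℤ)) with hr
  set s : ℤ := 2 * (Aj - Aj') + (k - k') with hs
  have hq0 : (0 : ℝ) < q := by positivity
  have hd0 : 0 ≤ d := hd ▸ abs_nonneg δ
  have h2ab : 2 * |β| = d := by rw [hβ, hd, abs_div, abs_two]; ring
  have hmaxmin : max β 0 - min β 0 = |β| := by
    rcases le_or_gt β 0 with h | h
    · rw [max_eq_right h, min_eq_left h, abs_of_nonpos h]; ring
    · rw [max_eq_left h.le, min_eq_right h.le, abs_of_pos h]; ring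
  set X : ℝ := 2 * ((j : ℝ) * α) - 2 * ((j' : ℝ) * α) - s with hX
  have hXabs : |X| < d := by
    rw [abs_lt]
    constructor
    · rw [hX, hs]
      push_cast
      nlinarith [hk1, hk2', hmaxmin, h2ab]
    · rw [hX, hs]
      push_cast
      nlinarith [hk2, hk1', hmaxmin, h2ab]
  have hrR : (r : ℝ) = 2 * ((j : ℝ) - (j' : ℝ)) := by rw [hr]; push_cast; ring
  have hNr : ((r * p - s * q : ℤ) : ℝ) = q * X - r * δ := by
    push_cast
    rw [hX, hrR]
    linear_combination (-2 * ((j : ℝ) - (j' : ℝ))) * hδ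
  have hr0 : r ≠ 0 := by
    simp only [hr]
    omega
  have hN0 : r * p - s * q ≠ 0 := by
    intro h0
    have hdvd : (q : ℤ) ∣ r * p := ⟨s, by linarith [h0]⟩
    have hqr : (q : ℤ) ∣ r := hcop.symm.dvd_of_dvd_mul_right hdvd
    have hle : (q : ℤ) ≤ |r| := Int.le_of_dvd (abs_pos.mpr hr0) ((dvd_abs _ _).mpr hqr)
    have hrb : |r| ≤ (q : ℤ) - 2 := by
      rw [abs_le]
      omega
    linarith
  have habs1 : (1 : ℝ) ≤ |((r * p - s * q : ℤ) : ℝ)| := by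
    rw [← Int.cast_abs]
    exact_mod_cast Int.one_le_abs hN0
  have hrbR : |(r : ℝ)| ≤ (q : ℝ) - 2 := by
    rw [abs_le, hrR]
    have e1 : (j : ℝ) + 1 ≤ m := by exact_mod_cast hj
    have e2 : (j' : ℝ) + 1 ≤ m := by exact_mod_cast hj'
    have e3 : (q : ℝ) = (m : ℝ) + (m : ℝ) := by exact_mod_cast hm
    have e4 : (0 : ℝ) ≤ (j : ℝ) := Nat.cast_nonneg j
    have e5 : (0 : ℝ) ≤ (j' : ℝ) := Nat.cast_nonneg j'
    constructor <;> linarith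
  have hbound : |((r * p - s * q : ℤ) : ℝ)| ≤ (q : ℝ) * |X| + |(r : ℝ)| * |δ| := by
    rw [hNr]
    calc |(q : ℝ) * X - r * δ| ≤ |(q : ℝ) * X| + |(r : ℝ) * δ| := abs_sub _ _
      _ = (q : ℝ) * |X| + |(r : ℝ)| * |δ| := by
          rw [abs_mul, abs_mul, abs_of_pos hq0]
  have hq2R : (2 : ℝ) ≤ q := by exact_mod_cast hq2
  have t1 : (q : ℝ) * |X| < q * d := by
    exact mul_lt_mul_of_pos_left hXabs hq0
  have t2 : |(r : ℝ)| * |δ| ≤ ((q : ℝ) - 2) * d := by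
    rw [← hd]
    exact mul_le_mul_of_nonneg_right hrbR hd0
  linarith

/-- If `q_n` is an even denominator of the irrational `α` with `q_n ‖q_n α‖ < 1/2`,
then there is a measurable set `I_n` of measure at most `q_n ‖q_n α‖` such that the
Birkhoff sum `F^{(q_n)}` is `±2` on `I_n` and `0` off `I_n`. -/
theorem birkhoff_Fhalf_of_even (α : ℝ) (hα : Irrational α) (n q : ℕ)
    (hq : (q : ℝ) = (GenContFract.of α).dens n) (heven : Even q)
    (hsmall : (q : ℝ) * distInt ((q : ℝ) * α) < 1/2) :
    ∃ I : Set ℝ, I ⊆ Set.Ico (0 : ℝ) 1 ∧ MeasurableSet I ∧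
      volume I ≤ ENNReal.ofReal ((q : ℝ) * distInt ((q : ℝ) * α)) ∧
      ∀ x ∈ Set.Ico (0 : ℝ) 1,
        (x ∈ I → (∑ j ∈ Finset.range q, Fhalf (x + (j : ℝ) * α)) = 2 ∨
                 (∑ j ∈ Finset.range q, Fhalf (x + (j : ℝ) * α)) = -2) ∧
        (x ∉ I → (∑ j ∈ Finset.range q, Fhalf (x + (j : ℝ) * α)) = 0) := by
  classical
  obtain ⟨p, hq1, hcop, happrox⟩ := cf_facts α hα n q hq
  obtain ⟨m, hm⟩ := heven
  have hq2 : 2 ≤ q := by omega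
  have hm1 : 1 ≤ m := by omega
  have hq2R : (2 : ℝ) ≤ q := by exact_mod_cast hq2
  have hq0 : (0 : ℝ) < q := by linarith
  set d := distInt ((q : ℝ) * α) with hd_def
  have hround : distInt ((q : ℝ) * α) = |(q : ℝ) * α - round ((q : ℝ) * α)| := distInt_eq _
  have hrle : |(q : ℝ) * α - round ((q : ℝ) * α)| ≤ |(q : ℝ) * α - p| := round_min _ p
  have happ2 : |(q : ℝ) * α - p| ≤ 1/2 := by
    refine happrox.trans ?_
    rw [div_le_div_iff₀ hq0 (by norm_num)]
    linarith
  have hd0 : 0 ≤ d := by rw [hd_def, hround]; exact abs_nonneg _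
  have hd_lt : d < 1/4 := by nlinarith [hsmall]
  have hpr : p = round ((q : ℝ) * α) := by
    have h1 : |(p : ℝ) - round ((q : ℝ) * α)| < 1 := by
      calc |(p : ℝ) - round ((q : ℝ) * α)|
          ≤ |(p : ℝ) - (q : ℝ) * α| + |(q : ℝ) * α - round ((q : ℝ) * α)| := abs_sub_le _ _ _
        _ = |(q : ℝ) * α - p| + |(q : ℝ) * α - round ((q : ℝ) * α)| := by rw [abs_sub_comm]
        _ < 1 := by
            have : |(q : ℝ) * α - round ((q : ℝ) * α)| = d := by rw [hd_def, hround]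
            rw [this]
            linarith
    have h2 : |(p - round ((q : ℝ) * α) : ℤ)| < 1 := by exact_mod_cast (by push_cast; exact h1 : |((p - round ((q : ℝ) * α) : ℤ) : ℝ)| < 1)
    have := abs_lt.mp h2
    omega
  have hd_eq : d = |(q : ℝ) * α - p| := by rw [hd_def, hround, hpr]
  have hsm : (q : ℝ) * d < 1/2 := hsmall
  -- p is odd
  have hpodd : Odd p := by
    rcases Int.even_or_odd p with hp | hp
    · exfalso
      have h2p : (2 : ℤ) ∣ p := hp.two_dvd
      have hq2m : q = 2 * m := by omega
      have h2q : (2 : ℤ) ∣ (q : ℤ) := ⟨m, by exact_mod_cast hq2m⟩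
      have := hcop.isUnit_of_dvd' h2p h2q
      rw [Int.isUnit_iff] at this
      omega
    · exact hp
  obtain ⟨t, ht⟩ := hpodd
  set δ : ℝ := (q : ℝ) * α - p with hδ_def
  have hδ : (q : ℝ) * α = p + δ := by rw [hδ_def]; ring
  set β : ℝ := δ / 2 with hβ_def
  have hd_abs : d = |δ| := by rw [hd_eq, hδ_def]
  have hβabs : |β| = d / 2 := by rw [hβ_def, abs_div, abs_two, hd_abs]
  have hβlt : |β| < 1/4 := by rw [hβabs]; linarith
  have hpt : (p : ℝ) = 2 * t + 1 := by exact_mod_cast ht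
  have hqm : (q : ℝ) = 2 * m := by
    have : (q : ℝ) = (m : ℝ) + m := by exact_mod_cast hm
    linarith
  have hmα : (m : ℝ) * α = (t : ℝ) + 1/2 + β := by
    have e1 : (q : ℝ) * α = 2 * ((m : ℝ) * α) := by rw [hqm]; ring
    rw [hβ_def]
    linarith [hδ, e1, hpt]
  -- the sum identity
  have hsum : ∀ x : ℝ, ∑ j ∈ Finset.range q, Fhalf (x + (j : ℝ) * α) =
      ∑ j ∈ Finset.range m, (Fhalf (x + (j : ℝ) * α) - Fhalf (x + (j : ℝ) * α + β)) := by
    intro x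
    rw [hm, Finset.sum_range_add]
    have hterm : ∀ j : ℕ, Fhalf (x + ((m + j : ℕ) : ℝ) * α) = -Fhalf (x + (j : ℝ) * α + β) := by
      intro j
      have he : x + ((m + j : ℕ) : ℝ) * α = ((x + (j : ℝ) * α + β) + 1/2) + (t : ℝ) := by
        push_cast
        linear_combination hmα
      rw [he, Fhalf_int_add, Fhalf_half]
    rw [Finset.sum_congr rfl (fun j _ => hterm j), Finset.sum_sub_distrib, Finset.sum_neg_distrib]
    ring
  -- definition of the exceptional set
  set S : ℝ → ℝ := fun x => ∑ j ∈ Finset.range q, Fhalf (x + (j : ℝ) * α) with hS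
  set I : Set ℝ := {x | x ∈ Set.Ico (0 : ℝ) 1 ∧ S x ≠ 0} with hI
  have hIsub : I ⊆ Set.Ico (0 : ℝ) 1 := fun x hx => hx.1
  have hSmeas : Measurable S := by
    apply Finset.measurable_sum
    intro j _
    exact measurable_Fhalf.comp (measurable_id.add_const _)
  have hImeas : MeasurableSet I := by
    have : I = Set.Ico (0 : ℝ) 1 ∩ S ⁻¹' ({0}ᶜ) := by
      ext x; simp [hI]
    rw [this]
    exact measurableSet_Ico.inter (hSmeas (measurableSet_singleton 0).compl)
  -- measure bound
  have hvol : volume I ≤ ENNReal.ofReal ((q : ℝ) * d) := by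
    have hIsub2 : I ⊆ ⋃ j ∈ Finset.range m,
        {x | x ∈ Set.Ico (0 : ℝ) 1 ∧
          Fhalf (x + (j : ℝ) * α) - Fhalf (x + (j : ℝ) * α + β) ≠ 0} := by
      rintro x ⟨hx01, hxS⟩
      have : ∃ j ∈ Finset.range m,
          Fhalf (x + (j : ℝ) * α) - Fhalf (x + (j : ℝ) * α + β) ≠ 0 := by
        by_contra hcon
        push_neg at hcon
        apply hxS
        rw [hS]
        simp only
        rw [hsum x]
        exact Finset.sum_eq_zero hcon
      obtain ⟨j, hjm, hjne⟩ := this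
      exact Set.mem_biUnion hjm ⟨hx01, hjne⟩
    calc volume I ≤ volume (⋃ j ∈ Finset.range m,
        {x | x ∈ Set.Ico (0 : ℝ) 1 ∧
          Fhalf (x + (j : ℝ) * α) - Fhalf (x + (j : ℝ) * α + β) ≠ 0}) := measure_mono hIsub2
      _ ≤ ∑ j ∈ Finset.range m, volume {x | x ∈ Set.Ico (0 : ℝ) 1 ∧
          Fhalf (x + (j : ℝ) * α) - Fhalf (x + (j : ℝ) * α + β) ≠ 0} :=
          measure_biUnion_finset_le _ _
      _ ≤ ∑ j ∈ Finset.range m, ENNReal.ofReal (4 * |β|) := by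
          apply Finset.sum_le_sum
          intro j _
          exact gvol_trans β ((j : ℝ) * α) hβlt
      _ = (m : ENNReal) * ENNReal.ofReal (4 * |β|) := by
          rw [Finset.sum_const, Finset.card_range, nsmul_eq_mul]
      _ = ENNReal.ofReal ((q : ℝ) * d) := by
          rw [← ENNReal.ofReal_natCast m, ← ENNReal.ofReal_mul (Nat.cast_nonneg m)]
          congr 1
          rw [hβabs, hqm]
          ring
  refine ⟨I, hIsub, hImeas, hvol, ?_⟩
  intro x hx01
  constructor
  · rintro ⟨-, hxS⟩
    have hSx : S x = ∑ j ∈ Finset.range m,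
        (Fhalf (x + (j : ℝ) * α) - Fhalf (x + (j : ℝ) * α + β)) := hsum x
    have hex : ∃ j ∈ Finset.range m,
        Fhalf (x + (j : ℝ) * α) - Fhalf (x + (j : ℝ) * α + β) ≠ 0 := by
      by_contra hcon
      push_neg at hcon
      exact hxS (hSx.trans (Finset.sum_eq_zero hcon))
    obtain ⟨j0, hj0m, hj0ne⟩ := hex
    have huniq : S x = Fhalf (x + (j0 : ℝ) * α) - Fhalf (x + (j0 : ℝ) * α + β) := by
      rw [hSx]
      apply Finset.sum_eq_single_of_mem j0 hj0m
      intro b hbm hbne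
      by_contra hbne0
      exact disj α p q m d β δ hδ hβ_def hd_abs hq2 hm hcop hsm hβlt x b j0
        (Finset.mem_range.mp hbm) (Finset.mem_range.mp hj0m) hbne hbne0 hj0ne
    rcases gval β (x + (j0 : ℝ) * α) with h0 | h2 | hm2
    · exact absurd h0 hj0ne
    · left; rw [show (∑ j ∈ Finset.range q, Fhalf (x + (j : ℝ) * α)) = S x from rfl, huniq, h2]
    · right; rw [show (∑ j ∈ Finset.range q, Fhalf (x + (j : ℝ) * α)) = S x from rfl, huniq, hm2]
  · intro hxnI
    by_contra hne
    exact hxnI ⟨hx01, hne⟩
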